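/- Let σ be a random full ranking of n items drawn from the Plackett–Luce model with parameter θ ∈ ℝ^n satisfying ‖θ‖_∞ ≤ B. Then for any two distinct items i and j, E[min{σ(i), σ(j)}] ≥ (1/2)·(n/(1+2e^{3B}) + 1). -/

import Mathlib

open scoped Classical

noncomputable section

/-- Probability of an event under a density `p` on a finite outcome space. -/
def probOf {α : Type*} [Fintype α] (p : α → ℝ) (E : Set α) : ℝ :=
  ∑ y, if y ∈ E then p y else 0

/-- Expectation of `f` under a density `p` on a finite outcome space. -/
def expect {α : Type*} [Fintype α] (p : α → ℝ) (f : α → ℝ) : ℝ := ∑ y, p y * f y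

/-- Plackett–Luce probability of a full ranking `σ`, where `σ x` is the (0-based)
rank of item `x`; the 1-based rank of item `x` is `(σ x : ℕ) + 1`. -/
def plProb {n : ℕ} (θ : Fin n → ℝ) (σ : Equiv.Perm (Fin n)) : ℝ :=
  ∏ i : Fin n,
    Real.exp (θ (σ.symm i)) /
      ∑ j ∈ Finset.univ.filter fun j : Fin n => i ≤ j, Real.exp (θ (σ.symm j))

/-- The 1-based rank of item `x` under ranking `σ`, as a real number. -/
def rank1 {n : ℕ} (σ : Equiv.Perm (Fin n)) (x : Fin n) : ℝ := ((σ x : ℕ) : ℝ) + 1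

namespace PLAux

variable {α : Type*} [DecidableEq α]

/-- Sequential-sampling (Plackett–Luce) probability of a list ordering. -/
def plw (w : α → ℝ) : List α → ℝ
  | [] => 1
  | a :: l => w a / (w a + (l.map w).sum) * plw w l

/-- All orderings of a finset, as a finset of lists. -/
def permsOf (s : Finset α) : Finset (List α) := s.toList.permutations.toFinset

lemma mem_permsOf {s : Finset α} {l : List α} :
    l ∈ permsOf s ↔ l.Nodup ∧ l.toFinset = s := by
  constructor
  · intro h
    have hp : l.Perm s.toList := List.mem_permutations.1 (List.mem_toFinset.1 h)
    exact ⟨hp.nodup_iff.2 s.nodup_toList,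
      (List.toFinset_eq_of_perm _ _ hp).trans s.toList_toFinset⟩
  · rintro ⟨h1, h2⟩
    exact List.mem_toFinset.2 (List.mem_permutations.2
      (List.perm_of_nodup_nodup_toFinset_eq h1 s.nodup_toList
        (h2.trans s.toList_toFinset.symm)))

lemma permsOf_empty : permsOf (∅ : Finset α) = {([] : List α)} := by
  ext l
  simp [mem_permsOf, List.toFinset_eq_empty_iff]
  rintro rfl; simp

lemma sum_permsOf (s : Finset α) (hs : s.Nonempty) (F : List α → ℝ) :
    ∑ l ∈ permsOf s, F l = ∑ a ∈ s, ∑ t ∈ permsOf (s.erase a), F (a :: t) := by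
  have hdecomp : permsOf s = s.biUnion (fun a => (permsOf (s.erase a)).image (a :: ·)) := by
    ext l
    simp only [Finset.mem_biUnion, Finset.mem_image, mem_permsOf]
    constructor
    · rintro ⟨hn, hf⟩
      cases l with
      | nil =>
        exfalso
        rw [List.toFinset_nil] at hf
        exact hs.ne_empty hf.symm
      | cons a t =>
        rw [List.nodup_cons] at hn
        rw [List.toFinset_cons] at hf
        have hat : a ∉ t.toFinset := fun h => hn.1 (List.mem_toFinset.1 h)
        have ha : a ∈ s := by rw [← hf]; exact Finset.mem_insert_self _ _
        refine ⟨a, ha, t, ⟨hn.2, ?_⟩, rfl⟩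
        rw [← hf, Finset.erase_insert hat]
    · rintro ⟨a, ha, t, ⟨hn, hf⟩, rfl⟩
      have hat : a ∉ t := by
        intro h
        exact (Finset.notMem_erase a s) (hf ▸ List.mem_toFinset.2 h)
      refine ⟨List.nodup_cons.2 ⟨hat, hn⟩, ?_⟩
      rw [List.toFinset_cons, hf, Finset.insert_erase ha]
  rw [hdecomp, Finset.sum_biUnion]
  · refine Finset.sum_congr rfl fun a _ => ?_
    exact Finset.sum_image fun x _ y _ h => (List.cons.injEq _ _ _ _ ▸ h).2
  · intro a _ b _ hab
    refine Finset.disjoint_left.2 ?_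
    rintro l hl hl'
    simp only [Finset.coe_image, Set.mem_image, Finset.mem_coe, Finset.mem_image] at hl hl'
    obtain ⟨t, _, rfl⟩ := hl
    obtain ⟨t', _, h⟩ := hl'
    exact hab ((List.cons.injEq _ _ _ _ ▸ h).1.symm ▸ rfl)

lemma map_sum_of_mem_permsOf {w : α → ℝ} {s : Finset α} {t : List α}
    (ht : t ∈ permsOf s) : (t.map w).sum = ∑ b ∈ s, w b := by
  obtain ⟨hn, hf⟩ := mem_permsOf.1 ht
  rw [← hf, List.sum_toFinset _ hn]

lemma sum_plw (w : α → ℝ) (hw : ∀ a, 0 < w a) (s : Finset α) :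
    ∑ l ∈ permsOf s, plw w l = 1 := by
  induction s using Finset.strongInduction with
  | _ s ih =>
    rcases s.eq_empty_or_nonempty with rfl | hs
    · rw [permsOf_empty]; simp [plw]
    · rw [sum_permsOf s hs]
      have hW : 0 < ∑ b ∈ s, w b := Finset.sum_pos (fun b _ => hw b) hs
      have key : ∀ a ∈ s, ∑ t ∈ permsOf (s.erase a), plw w (a :: t)
          = w a / ∑ b ∈ s, w b := by
        intro a ha
        have h1 : ∀ t ∈ permsOf (s.erase a),
            plw w (a :: t) = (w a / ∑ b ∈ s, w b) * plw w t := by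
          intro t ht
          show w a / (w a + (t.map w).sum) * plw w t = _
          rw [map_sum_of_mem_permsOf ht, Finset.add_sum_erase _ _ ha]
        rw [Finset.sum_congr rfl h1, ← Finset.mul_sum,
          ih (s.erase a) (Finset.erase_ssubset ha), mul_one]
      rw [Finset.sum_congr rfl key, ← Finset.sum_div, div_self hW.ne']

/-- The event that `x` comes before both `i` and `j` in the list. -/
def cond3 (x i j : α) (l : List α) : Prop :=
  l.idxOf x < l.idxOf i ∧ l.idxOf x < l.idxOf j

lemma sum_plw_first (w : α → ℝ) (hw : ∀ a, 0 < w a) (x i j : α)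
    (hxi : x ≠ i) (hxj : x ≠ j) (hij : i ≠ j) (s : Finset α) :
    x ∈ s → i ∈ s → j ∈ s →
    ∑ l ∈ permsOf s, (if cond3 x i j l then plw w l else 0)
      = w x / (w x + w i + w j) := by
  induction s using Finset.strongInduction with
  | _ s ih =>
    intro hx hi hj
    have hs : s.Nonempty := ⟨x, hx⟩
    have hW : 0 < ∑ b ∈ s, w b := Finset.sum_pos (fun b _ => hw b) hs
    set W := ∑ b ∈ s, w b with hWdef
    set T := w x + w i + w j with hTdef
    have hT : 0 < T := by
      have := hw x; have := hw i; have := hw j; rw [hTdef]; linarith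
    have plw_cons : ∀ a, ∀ t ∈ permsOf (s.erase a), a ∈ s →
        plw w (a :: t) = w a / W * plw w t := by
      intro a t ht ha
      show w a / (w a + (t.map w).sum) * plw w t = _
      rw [map_sum_of_mem_permsOf ht, Finset.add_sum_erase _ _ ha]
    have Hx : (∑ t ∈ permsOf (s.erase x),
        if cond3 x i j (x :: t) then plw w (x :: t) else 0) = w x / W := by
      have h1 : ∀ t ∈ permsOf (s.erase x),
          (if cond3 x i j (x :: t) then plw w (x :: t) else 0) = w x / W * plw w t := by
        intro t ht
        have hc : cond3 x i j (x :: t) := by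
          constructor <;>
          · rw [List.idxOf_cons_self,
              List.idxOf_cons_ne _ (by first | exact hxi | exact hxj)]
            exact Nat.succ_pos _
        rw [if_pos hc, plw_cons x t ht hx]
      rw [Finset.sum_congr rfl h1, ← Finset.mul_sum, sum_plw w hw, mul_one]
    have Hi : (∑ t ∈ permsOf (s.erase i),
        if cond3 x i j (i :: t) then plw w (i :: t) else 0) = 0 := by
      refine Finset.sum_eq_zero fun t ht => ?_
      have hc : ¬ cond3 x i j (i :: t) := by
        intro hc
        have h2 := hc.1
        rw [List.idxOf_cons_self, List.idxOf_cons_ne _ hxi.symm] at h2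
        exact Nat.not_lt_zero _ h2
      rw [if_neg hc]
    have Hj : (∑ t ∈ permsOf (s.erase j),
        if cond3 x i j (j :: t) then plw w (j :: t) else 0) = 0 := by
      refine Finset.sum_eq_zero fun t ht => ?_
      have hc : ¬ cond3 x i j (j :: t) := by
        intro hc
        have h2 := hc.2
        rw [List.idxOf_cons_self, List.idxOf_cons_ne _ hxj.symm] at h2
        exact Nat.not_lt_zero _ h2
      rw [if_neg hc]
    have hsub : ({x, i, j} : Finset α) ⊆ s := by
      intro a ha
      simp only [Finset.mem_insert, Finset.mem_singleton] at ha
      rcases ha with rfl | rfl | rfl <;> assumption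
    have Hother : ∀ a ∈ s \ ({x, i, j} : Finset α),
        (∑ t ∈ permsOf (s.erase a), if cond3 x i j (a :: t) then plw w (a :: t) else 0)
          = w a / W * (w x / T) := by
      intro a ha
      rw [Finset.mem_sdiff] at ha
      obtain ⟨has, hne⟩ := ha
      simp only [Finset.mem_insert, Finset.mem_singleton, not_or] at hne
      obtain ⟨hax, hai, haj⟩ := hne
      have h1 : ∀ t ∈ permsOf (s.erase a),
          (if cond3 x i j (a :: t) then plw w (a :: t) else 0)
            = w a / W * (if cond3 x i j t then plw w t else 0) := by
        intro t ht
        have hcc : cond3 x i j (a :: t) ↔ cond3 x i j t := by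
          unfold cond3
          rw [List.idxOf_cons_ne _ hax, List.idxOf_cons_ne _ hai,
            List.idxOf_cons_ne _ haj, Nat.succ_lt_succ_iff, Nat.succ_lt_succ_iff]
        by_cases hc : cond3 x i j t
        · rw [if_pos (hcc.2 hc), if_pos hc, plw_cons a t ht has]
        · rw [if_neg (fun h => hc (hcc.1 h)), if_neg hc, mul_zero]
      rw [Finset.sum_congr rfl h1, ← Finset.mul_sum,
        ih (s.erase a) (Finset.erase_ssubset has)
          (Finset.mem_erase.2 ⟨Ne.symm hax, hx⟩)
          (Finset.mem_erase.2 ⟨Ne.symm hai, hi⟩)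
          (Finset.mem_erase.2 ⟨Ne.symm haj, hj⟩)]
    have hxij : x ∉ ({i, j} : Finset α) := by simp [hxi, hxj]
    have hijj : i ∉ ({j} : Finset α) := by simp [hij]
    have hwsum : ∑ a ∈ s \ ({x, i, j} : Finset α), w a = W - T := by
      have := Finset.sum_sdiff (f := w) hsub
      have htri : ∑ a ∈ ({x, i, j} : Finset α), w a = T := by
        rw [Finset.sum_insert hxij, Finset.sum_insert hijj, Finset.sum_singleton, hTdef]
        ring
      rw [htri] at this
      linarith
    rw [sum_permsOf s hs, ← Finset.sum_sdiff hsub, Finset.sum_congr rfl Hother,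
      Finset.sum_insert hxij, Finset.sum_insert hijj, Finset.sum_singleton,
      Hx, Hi, Hj, ← Finset.sum_mul, ← Finset.sum_div, hwsum]
    field_simp
    ring

lemma plw_ofFn (w : α → ℝ) : ∀ (n : ℕ) (f : Fin n → α),
    plw w (List.ofFn f) =
      ∏ i : Fin n, w (f i) / ∑ j ∈ Finset.univ.filter (fun j => i ≤ j), w (f j)
  | 0, f => by simp [plw]
  | (n+1), f => by
    rw [List.ofFn_succ]
    show w (f 0) / (w (f 0) + ((List.ofFn fun i => f i.succ).map w).sum) *
        plw w (List.ofFn fun i => f i.succ) = _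
    rw [plw_ofFn w n (fun i => f i.succ), Fin.prod_univ_succ]
    congr 1
    · congr 1
      rw [List.map_ofFn, List.sum_ofFn]
      have : (Finset.univ.filter (fun j : Fin (n+1) => (0 : Fin (n+1)) ≤ j)) = Finset.univ := by
        refine Finset.filter_true_of_mem fun j _ => Fin.zero_le j
      rw [this, Fin.sum_univ_succ]
      rfl
    · refine Finset.prod_congr rfl fun i _ => ?_
      congr 1
      rw [Finset.sum_filter, Finset.sum_filter, Fin.sum_univ_succ]
      have h0 : ¬ (i.succ ≤ (0 : Fin (n+1))) := by
        simp [Fin.le_zero_iff, Fin.succ_ne_zero]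
      rw [if_neg h0, zero_add]
      refine Finset.sum_congr rfl fun k _ => ?_
      by_cases h : i ≤ k
      · rw [if_pos h, if_pos (Fin.succ_le_succ_iff.2 h)]
      · rw [if_neg h, if_neg (fun hc => h (Fin.succ_le_succ_iff.1 hc))]

lemma idxOf_ofFn {n : ℕ} (σ : Equiv.Perm (Fin n)) (x : Fin n) :
    (List.ofFn σ.symm).idxOf x = (σ x : ℕ) := by
  set L := List.ofFn σ.symm with hL
  have hlen : L.length = n := List.length_ofFn
  have hnd : L.Nodup := List.nodup_ofFn.2 σ.symm.injective
  have hmem : x ∈ L := List.mem_ofFn.2 ⟨σ x, σ.symm_apply_apply x⟩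
  have hidx : L.idxOf x < L.length := List.idxOf_lt_length_iff.2 hmem
  have h1 : L.get ⟨L.idxOf x, hidx⟩ = x := List.idxOf_get hidx
  have h2 : L.get ⟨(σ x : ℕ), by rw [hlen]; exact (σ x).isLt⟩ = x := by
    simp [hL, List.get_ofFn]
  have hinj := List.nodup_iff_injective_get.1 hnd
  exact congrArg Fin.val (hinj (h1.trans h2.symm))

lemma sum_perm_eq (n : ℕ) (F : List (Fin n) → ℝ) :
    ∑ σ : Equiv.Perm (Fin n), F (List.ofFn σ.symm)
      = ∑ l ∈ permsOf (Finset.univ : Finset (Fin n)), F l := by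
  refine Finset.sum_bij (fun σ _ => List.ofFn σ.symm) ?_ ?_ ?_ ?_
  · intro σ _
    rw [mem_permsOf]
    refine ⟨List.nodup_ofFn.2 σ.symm.injective, ?_⟩
    refine Finset.eq_univ_iff_forall.2 fun x => ?_
    exact List.mem_toFinset.2 (List.mem_ofFn.2 ⟨σ x, σ.symm_apply_apply x⟩)
  · intro σ1 _ σ2 _ h
    have h' : List.ofFn ⇑σ1.symm = List.ofFn ⇑σ2.symm := h
    have hsymm : σ1.symm = σ2.symm := Equiv.coe_fn_injective (List.ofFn_injective h')
    calc σ1 = σ1.symm.symm := rfl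
    _ = σ2.symm.symm := by rw [hsymm]
    _ = σ2 := rfl
  · intro l hl
    obtain ⟨hnd, hf⟩ := mem_permsOf.1 hl
    have hlen : l.length = n := by
      have := List.toFinset_card_of_nodup hnd
      rw [hf, Finset.card_univ, Fintype.card_fin] at this
      exact this.symm
    have hg : Function.Injective (fun k : Fin n => l.get (Fin.cast hlen.symm k)) := by
      intro a b hab
      have := congrArg Fin.val (List.nodup_iff_injective_get.1 hnd hab)
      exact Fin.ext (by simpa using this)
    have hbij : Function.Bijective (fun k : Fin n => l.get (Fin.cast hlen.symm k)) :=
      (Finite.injective_iff_bijective).1 hg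
    refine ⟨(Equiv.ofBijective _ hbij).symm, Finset.mem_univ _, ?_⟩
    show List.ofFn (Equiv.ofBijective _ hbij).symm.symm = l
    rw [Equiv.symm_symm]
    have : ⇑(Equiv.ofBijective _ hbij) = fun k : Fin n => l.get (Fin.cast hlen.symm k) := rfl
    rw [this]
    refine List.ext_get (by simp [hlen]) fun k h1 h2 => ?_
    simp [List.get_ofFn]
  · intros; rfl

lemma card_filter_lt (n : ℕ) (M : ℕ) (hM : M < n) :
    (Finset.univ.filter (fun y : Fin n => (y : ℕ) < M)).card = M := by
  have h1 : Finset.univ.filter (fun y : Fin n => (y : ℕ) < M)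
      = Finset.Iio (⟨M, hM⟩ : Fin n) := by
    ext y
    simp [Fin.lt_def]
  rw [h1, Fin.card_Iio]

lemma min_rank_eq {n : ℕ} (σ : Equiv.Perm (Fin n)) (i j : Fin n) :
    min (rank1 σ i) (rank1 σ j) =
      1 + ∑ x : Fin n, (if σ x < σ i ∧ σ x < σ j then (1 : ℝ) else 0) := by
  set M : ℕ := min ((σ i : ℕ)) ((σ j : ℕ)) with hM
  have hMlt : M < n := lt_of_le_of_lt (min_le_left _ _) (σ i).isLt
  have hsum : ∑ x : Fin n, (if σ x < σ i ∧ σ x < σ j then (1 : ℝ) else 0)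
      = ((Finset.univ.filter (fun x : Fin n => σ x < σ i ∧ σ x < σ j)).card : ℝ) := by
    rw [Finset.sum_boole]
  have hfilter : Finset.univ.filter (fun x : Fin n => σ x < σ i ∧ σ x < σ j)
      = Finset.univ.filter (fun x : Fin n => ((σ x : ℕ)) < M) := by
    ext x
    simp only [Finset.mem_filter, Finset.mem_univ, true_and, hM, Nat.lt_min, Fin.lt_def]
  have hcard : (Finset.univ.filter (fun x : Fin n => ((σ x : ℕ)) < M)).card
      = (Finset.univ.filter (fun y : Fin n => ((y : ℕ)) < M)).card := by
    refine Finset.card_bij' (fun x _ => σ x) (fun y _ => σ.symm y) ?_ ?_ ?_ ?_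
    · intro x hx
      simp only [Finset.mem_filter, Finset.mem_univ, true_and] at hx ⊢
      exact hx
    · intro y hy
      simp only [Finset.mem_filter, Finset.mem_univ, true_and] at hy ⊢
      rwa [σ.apply_symm_apply]
    · intro x _; exact σ.symm_apply_apply x
    · intro y _; exact σ.apply_symm_apply y
  rw [hsum, hfilter, hcard, card_filter_lt n M hMlt]
  have h1 : rank1 σ i = ((σ i : ℕ) : ℝ) + 1 := rfl
  have h2 : rank1 σ j = ((σ j : ℕ) : ℝ) + 1 := rfl
  rw [h1, h2, min_add_add_right, hM]
  push_cast [Nat.cast_min]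
  ring

end PLAux

/-- for a PL(θ) ranking with `‖θ‖_∞ ≤ B` and distinct items
`i ≠ j`, `E[min{σ(i),σ(j)}] ≥ (1/2)·(n/(1+2e^{3B}) + 1)`. -/
theorem pl_min_rank_expectation_bound
    (n : ℕ) (B : ℝ) (θ : Fin n → ℝ) (hθ : ∀ i, |θ i| ≤ B)
    (i j : Fin n) (hij : i ≠ j) :
    (1 / 2) * ((n : ℝ) / (1 + 2 * Real.exp (3 * B)) + 1) ≤
      expect (plProb θ) (fun σ => min (rank1 σ i) (rank1 σ j)) := by
  classical
  open PLAux in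
  set w : Fin n → ℝ := fun x => Real.exp (θ x) with hw
  have hwpos : ∀ x, 0 < w x := fun x => Real.exp_pos _
  have hB : 0 ≤ B := le_trans (abs_nonneg _) (hθ i)
  have hn2 : 2 ≤ n := by
    have h1 : (i : ℕ) ≠ (j : ℕ) := fun h => hij (Fin.ext h)
    have h2 := i.isLt
    have h3 := j.isLt
    omega
  set D : ℝ := 1 + 2 * Real.exp (3 * B) with hD
  have hD0 : 0 < D := by positivity
  have hD3 : 3 ≤ D := by
    have : (1 : ℝ) ≤ Real.exp (3 * B) := Real.one_le_exp (by linarith)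
    rw [hD]; linarith
  -- the PL probability equals the list probability
  have hp : ∀ σ : Equiv.Perm (Fin n), plProb θ σ = plw w (List.ofFn ⇑σ.symm) := by
    intro σ
    rw [plw_ofFn]
    rfl
  -- total mass one
  have htotal : ∑ σ : Equiv.Perm (Fin n), plProb θ σ = 1 := by
    rw [Finset.sum_congr rfl fun σ _ => hp σ]
    rw [sum_perm_eq n (plw w), sum_plw w hwpos]
  -- probability the item x beats both i and j
  have hbeat : ∀ x : Fin n, x ≠ i → x ≠ j →
      ∑ σ : Equiv.Perm (Fin n), (plProb θ σ * if σ x < σ i ∧ σ x < σ j then (1:ℝ) else 0)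
        = w x / (w x + w i + w j) := by
    intro x hxi hxj
    have hterm : ∀ σ : Equiv.Perm (Fin n),
        plProb θ σ * (if σ x < σ i ∧ σ x < σ j then (1:ℝ) else 0)
          = (if cond3 x i j (List.ofFn ⇑σ.symm) then plw w (List.ofFn ⇑σ.symm) else 0) := by
      intro σ
      have hc : cond3 x i j (List.ofFn ⇑σ.symm) ↔ (σ x < σ i ∧ σ x < σ j) := by
        unfold cond3
        rw [idxOf_ofFn, idxOf_ofFn, idxOf_ofFn, Fin.lt_def, Fin.lt_def]
      by_cases h : σ x < σ i ∧ σ x < σ j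
      · rw [if_pos h, if_pos (hc.2 h), mul_one, hp σ]
      · rw [if_neg h, if_neg (fun hcc => h (hc.1 hcc)), mul_zero]
    rw [Finset.sum_congr rfl fun σ _ => hterm σ]
    rw [sum_perm_eq n (fun l => if cond3 x i j l then plw w l else 0)]
    exact sum_plw_first w hwpos x i j hxi hxj hij Finset.univ
      (Finset.mem_univ _) (Finset.mem_univ _) (Finset.mem_univ _)
  -- lower bound on each beating probability
  have hratio : ∀ x : Fin n, 1 / D ≤ w x / (w x + w i + w j) := by
    intro x
    have hwx : Real.exp (-B) ≤ w x := by
      rw [hw]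
      exact Real.exp_le_exp.2 (neg_le_of_abs_le (hθ x))
    have hwi : w i ≤ Real.exp B := Real.exp_le_exp.2 (le_of_abs_le (hθ i))
    have hwj : w j ≤ Real.exp B := Real.exp_le_exp.2 (le_of_abs_le (hθ j))
    have hS : 0 < w x + w i + w j := by
      have := hwpos x; have := hwpos i; have := hwpos j; linarith
    rw [div_le_div_iff₀ hD0 hS, one_mul]
    have key : Real.exp B ≤ Real.exp (3 * B) * w x := by
      have h1 : Real.exp (3 * B) * Real.exp (-B) = Real.exp (2 * B) := by
        rw [← Real.exp_add]; ring_nf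
      have h2 : Real.exp B ≤ Real.exp (2 * B) := Real.exp_le_exp.2 (by linarith)
      have h3 : Real.exp (3 * B) * Real.exp (-B) ≤ Real.exp (3 * B) * w x :=
        mul_le_mul_of_nonneg_left hwx (Real.exp_pos _).le
      linarith
    have := hwpos x
    rw [hD]
    nlinarith [key, hwi, hwj]
  -- expectation computation
  have hexpand : expect (plProb θ) (fun σ => min (rank1 σ i) (rank1 σ j))
      = 1 + ∑ x : Fin n, ∑ σ : Equiv.Perm (Fin n),
          (plProb θ σ * if σ x < σ i ∧ σ x < σ j then (1:ℝ) else 0) := by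
    unfold expect
    simp only [min_rank_eq]
    have : ∀ σ : Equiv.Perm (Fin n),
        plProb θ σ * (1 + ∑ x : Fin n, (if σ x < σ i ∧ σ x < σ j then (1:ℝ) else 0))
          = plProb θ σ + ∑ x : Fin n, (plProb θ σ * if σ x < σ i ∧ σ x < σ j then (1:ℝ) else 0) := by
      intro σ
      rw [mul_add, mul_one, Finset.mul_sum]
    rw [Finset.sum_congr rfl fun σ _ => this σ, Finset.sum_add_distrib, htotal,
      Finset.sum_comm]
  rw [hexpand]
  -- sum over x: zero for x = i, j; bounded below otherwise
  set g : Fin n → ℝ := fun x => ∑ σ : Equiv.Perm (Fin n),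
      (plProb θ σ * if σ x < σ i ∧ σ x < σ j then (1:ℝ) else 0) with hg
  have hgi : g i = 0 := by
    rw [hg]
    refine Finset.sum_eq_zero fun σ _ => ?_
    rw [if_neg (fun h => absurd h.1 (lt_irrefl _)), mul_zero]
  have hgj : g j = 0 := by
    rw [hg]
    refine Finset.sum_eq_zero fun σ _ => ?_
    rw [if_neg (fun h => absurd h.2 (lt_irrefl _)), mul_zero]
  have hsub : ({i, j} : Finset (Fin n)) ⊆ Finset.univ := Finset.subset_univ _
  have hsplit : ∑ x : Fin n, g x = ∑ x ∈ Finset.univ \ ({i, j} : Finset (Fin n)), g x := by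
    rw [← Finset.sum_sdiff hsub]
    have : ∑ x ∈ ({i, j} : Finset (Fin n)), g x = 0 := by
      rw [Finset.sum_insert (by simp [hij]), Finset.sum_singleton, hgi, hgj, add_zero]
    rw [this, add_zero]
  have hcard : (Finset.univ \ ({i, j} : Finset (Fin n))).card = n - 2 := by
    rw [Finset.card_sdiff_of_subset hsub, Finset.card_univ, Fintype.card_fin]
    congr 1
    rw [Finset.card_insert_of_notMem (by simp [hij]), Finset.card_singleton]
  have hlow : ∀ x ∈ Finset.univ \ ({i, j} : Finset (Fin n)), 1 / D ≤ g x := by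
    intro x hx
    simp only [Finset.mem_sdiff, Finset.mem_univ, true_and, Finset.mem_insert,
      Finset.mem_singleton, not_or] at hx
    simp only [hg]
    rw [hbeat x hx.1 hx.2]
    exact hratio x
  have hsumlow : ((n : ℝ) - 2) * (1 / D) ≤ ∑ x : Fin n, g x := by
    rw [hsplit]
    have := Finset.card_nsmul_le_sum (Finset.univ \ ({i, j} : Finset (Fin n))) g (1 / D) hlow
    rw [hcard, nsmul_eq_mul] at this
    have hc : ((n - 2 : ℕ) : ℝ) = (n : ℝ) - 2 := by
      push_cast [Nat.cast_sub hn2]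
      ring
    rwa [hc] at this
  -- final arithmetic
  have hu0 : 0 < 1 / D := by positivity
  have hu3 : 1 / D ≤ 1 / 3 := by
    apply one_div_le_one_div_of_le <;> linarith
  have hnD : (n : ℝ) / D = (n : ℝ) * (1 / D) := by ring
  have hn2' : (2 : ℝ) ≤ (n : ℝ) := by exact_mod_cast hn2
  rw [hnD]
  nlinarith [hsumlow, mul_le_mul_of_nonneg_left hu3 (by linarith : (0:ℝ) ≤ (n:ℝ) - 2),
    mul_pos (by linarith : (0:ℝ) < (n:ℝ) - 2 + 1) hu0]

end
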